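/- Let A# be the universal axiomatic semantics with Stages = {S, T} and the two axioms ax0: ∀i1. hb(i1.S, i1.T) and ax1: ∀i1,i2. hb(i1.S, i2.S) ⇒ hb(i1.T, i2.T). There is a constant c > 0 such that for every m ≥ 1, taking P to be the single-core program with m instructions, every operational model M = (Q, Δ, q_init, q_final) that is sound and complete with respect to A# on P (even with unbounded history h = ∞) satisfies |Q| ≥ c · 2^m / m. -/

import Mathlib

namespace USpec

/-- An instruction: its core identifier, its label (index in the instruction
stream), and its operation. -/
structure Instr (Core Op : Type) where
  core : Core
  lbl  : ℕ
  op   : Op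
  deriving DecidableEq

/-- An event `i.st`: instruction `i` performing at stage `st`. -/
structure Event (Core Stage Op : Type) where
  instr : Instr Core Op
  stage : Stage
  deriving DecidableEq

/-- A program: a finite instruction stream for each core. -/
abbrev Program (Core Op : Type) := Core → List Op

/-- The set of instructions of a program. -/
def instrs {Core Op : Type} (P : Program Core Op) : Set (Instr Core Op) :=
  {i | (P i.core)[i.lbl]? = some i.op}

/-- The events generated by a set of instructions. -/
def eventsOf {Core Op : Type} (Stage : Type) (I : Set (Instr Core Op)) :
    Set (Event Core Stage Op) :=
  {e | e.instr ∈ I}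

/-- The set of events of a program: one event per instruction and stage. -/
def events {Core Op : Type} (Stage : Type) (P : Program Core Op) :
    Set (Event Core Stage Op) :=
  eventsOf Stage (instrs P)

/-- Reference (program) order on instructions: same core, smaller label. -/
def refLt {Core Op : Type} (i' i : Instr Core Op) : Prop :=
  i'.core = i.core ∧ i'.lbl < i.lbl

/-- Quantifier-free part of a universal μspec axiom with `k` quantified
instruction variables: Boolean combinations of reference-order atoms,
happens-before atoms, and predicate-application atoms. -/
inductive Phi (k : ℕ) (Stage PSym : Type) (ar : PSym → ℕ) : Type
  | refOrd (a b : Fin k)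
  | hb (a : Fin k) (st : Stage) (b : Fin k) (st' : Stage)
  | pred (p : PSym) (args : Fin (ar p) → Fin k)
  | conj (φ ψ : Phi k Stage PSym ar)
  | disj (φ ψ : Phi k Stage PSym ar)
  | neg (φ : Phi k Stage PSym ar)

/-- A universal axiom `∀ i1 ⋯ ∀ ik, φ(i1,…,ik)`. -/
structure UAxiom (Stage PSym : Type) (ar : PSym → ℕ) where
  k : ℕ
  phi : Phi k Stage PSym ar

/-- Evaluation of the quantifier-free part `φ` under an assignment `s` of the
variables to instructions, where `R` is the happens-before relation (the
transitive closure of the edges of the graph under consideration) and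
`interp` interprets the predicate symbols over operations. -/
def Sat {Core Stage Op PSym : Type} {ar : PSym → ℕ} {k : ℕ}
    (interp : ∀ p : PSym, (Fin (ar p) → Op) → Prop)
    (R : Event Core Stage Op → Event Core Stage Op → Prop)
    (s : Fin k → Instr Core Op) : Phi k Stage PSym ar → Prop
  | .refOrd a b => refLt (s a) (s b)
  | .hb a st b st' => R ⟨s a, st⟩ ⟨s b, st'⟩
  | .pred p args => interp p fun j => (s (args j)).op
  | .conj φ ψ => Sat interp R s φ ∧ Sat interp R s ψ
  | .disj φ ψ => Sat interp R s φ ∨ Sat interp R s ψ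
  | .neg φ => ¬ Sat interp R s φ

/-- Satisfaction of a universal axiom relative to an instruction set `I` and a
happens-before relation `R`: the body must hold for every injective assignment
of the variables to instructions of `I`. -/
def SatAx {Core Stage Op PSym : Type} {ar : PSym → ℕ}
    (interp : ∀ p : PSym, (Fin (ar p) → Op) → Prop)
    (I : Set (Instr Core Op))
    (R : Event Core Stage Op → Event Core Stage Op → Prop)
    (ax : UAxiom Stage PSym ar) : Prop :=
  ∀ s : Fin ax.k → Instr Core Op, Function.Injective s → (∀ a, s a ∈ I) →
    Sat interp R s ax.phi

/-- Acyclicity of an edge relation. -/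
def Acyclic {α : Type} (E : α → α → Prop) : Prop :=
  ∀ x, ¬ Relation.TransGen E x x

/-- `E` is (the edge relation of) a μhb graph on vertex set `V`: all edges are
between vertices of `V` and the graph is acyclic (a DAG). -/
def IsMuHb {Core Stage Op : Type} (V : Set (Event Core Stage Op))
    (E : Event Core Stage Op → Event Core Stage Op → Prop) : Prop :=
  (∀ e1 e2, E e1 e2 → e1 ∈ V ∧ e2 ∈ V) ∧ Acyclic E

/-- Satisfaction of a universal axiom by a μhb graph (with edges `E`) relative
to an instruction set `I`: happens-before is the transitive closure of `E`. -/
def GraphSatAx {Core Stage Op PSym : Type} {ar : PSym → ℕ}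
    (interp : ∀ p : PSym, (Fin (ar p) → Op) → Prop)
    (I : Set (Instr Core Op))
    (E : Event Core Stage Op → Event Core Stage Op → Prop)
    (ax : UAxiom Stage PSym ar) : Prop :=
  SatAx interp I (Relation.TransGen E) ax

/-- `G ⊨_P A`: the μhb graph with edges `E` satisfies every axiom of the
axiomatic semantics `A` for program `P`. -/
def Models {Core Stage Op PSym : Type} {ar : PSym → ℕ}
    (interp : ∀ p : PSym, (Fin (ar p) → Op) → Prop)
    (P : Program Core Op)
    (E : Event Core Stage Op → Event Core Stage Op → Prop)
    (A : List (UAxiom Stage PSym ar)) : Prop :=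
  ∀ ax ∈ A, GraphSatAx interp (instrs P) E ax

/-- `G ⊑ G'` (on a common vertex set): `E⁺ ⊆ E'⁺`. -/
def Refines {Core Stage Op : Type}
    (E E' : Event Core Stage Op → Event Core Stage Op → Prop) : Prop :=
  ∀ e1 e2, Relation.TransGen E e1 e2 → Relation.TransGen E' e1 e2

/-- A graph is linear on `V` if its transitive closure totally orders `V`. -/
def Linear {Core Stage Op : Type} (V : Set (Event Core Stage Op))
    (E : Event Core Stage Op → Event Core Stage Op → Prop) : Prop :=
  ∀ e1 ∈ V, ∀ e2 ∈ V, e1 ≠ e2 →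
    Relation.TransGen E e1 e2 ∨ Relation.TransGen E e2 e1

/-- Refinability of an axiomatic semantics: for every program, every
linearization of a valid μhb graph is valid. -/
def Refinable {Core Stage Op PSym : Type} {ar : PSym → ℕ}
    (interp : ∀ p : PSym, (Fin (ar p) → Op) → Prop)
    (A : List (UAxiom Stage PSym ar)) : Prop :=
  ∀ (P : Program Core Op)
    (E E' : Event Core Stage Op → Event Core Stage Op → Prop),
    IsMuHb (events Stage P) E → Models interp P E A →
    IsMuHb (events Stage P) E' → Linear (events Stage P) E' → Refines E E' →
    Models interp P E' A

/-- The strict order of a list: `x` occurs (at some position) strictly before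
`y`.  For a duplicate-free list this is the happens-before relation of the
linear μhb graph `σ[0] → σ[1] → ⋯`. -/
def listEdge {α : Type} (σ : List α) (x y : α) : Prop :=
  ∃ m n : ℕ, m < n ∧ σ[m]? = some x ∧ σ[n]? = some y

/-- `σ ∈ events(P)^perm`: the word `σ` contains each event of `P` exactly
once. -/
def IsPermTrace {Core Stage Op : Type} (P : Program Core Op)
    (σ : List (Event Core Stage Op)) : Prop :=
  σ.Nodup ∧ ∀ e, e ∈ σ ↔ e ∈ events Stage P

/-- `σ` is a linearization of the μhb graph with edges `E` on `events(P)`. -/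
def IsLinearization {Core Stage Op : Type} (P : Program Core Op)
    (E : Event Core Stage Op → Event Core Stage Op → Prop)
    (σ : List (Event Core Stage Op)) : Prop :=
  IsPermTrace P σ ∧ ∀ e1 e2, Relation.TransGen E e1 e2 → listEdge σ e1 e2

/-- Satisfaction of an axiomatic semantics by a trace `σ`, viewed as the
linear μhb graph `σ[0] → σ[1] → ⋯`. -/
def TraceModels {Core Stage Op PSym : Type} {ar : PSym → ℕ}
    (interp : ∀ p : PSym, (Fin (ar p) → Op) → Prop)
    (P : Program Core Op) (σ : List (Event Core Stage Op))
    (A : List (UAxiom Stage PSym ar)) : Prop :=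
  ∀ ax ∈ A, SatAx interp (instrs P) (listEdge σ) ax

/-- Actions of an operational model: move the tape head of core `c` right,
stay silent, schedule (emit) the event of the `idx`-th instruction left of the
head of core `c` at stage `st`, or drop the `idx`-th instruction left of the
head of core `c`. -/
inductive Act (Core Stage : Type) : Type
  | right (c : Core)
  | stay
  | sched (c : Core) (idx : ℕ) (st : Stage)
  | drop (c : Core) (idx : ℕ)

/-- An operational model `M = (Q, Δ, q_init, q_final)` with history bound
`hist ∈ ℕ ∪ {∞}`.  Transitions are guarded by the instructions currently under
the tape heads (`none` standing for `−`), and `q_final` is absorbing. -/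
structure OpModel (Core Stage Op Q : Type) where
  hist : ℕ∞
  Δ : Set (Q × (Core → Option (Instr Core Op)) × Q × Act Core Stage)
  qinit : Q
  qfinal : Q
  absorbing : ∀ g q' a, (qfinal, g, q', a) ∈ Δ → q' = qfinal

/-- A configuration `(U, q, V)`: tape contents to the left (`U`) and right
(`V`) of each core's head, and the current control state `q`. -/
structure Config (Core Op Q : Type) where
  U : Core → List (Instr Core Op)
  q : Q
  V : Core → List (Instr Core Op)

/-- The instructions currently under the tape heads. -/
def heads {Core Op : Type} (V : Core → List (Instr Core Op)) :
    Core → Option (Instr Core Op) :=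
  fun c => (V c).head?

/-- A configuration is allowed if each left tape content has length at most
the history bound `h`. -/
def Allowed {Core Op Q : Type} (h : ℕ∞) (γ : Config Core Op Q) : Prop :=
  ∀ c, ((γ.U c).length : ℕ∞) ≤ h

/-- One step of the operational model, optionally emitting an event. -/
inductive Step {Core Stage Op Q : Type} [DecidableEq Core]
    (M : OpModel Core Stage Op Q) :
    Config Core Op Q → Option (Event Core Stage Op) → Config Core Op Q → Prop
  | right {q q' : Q} {U V : Core → List (Instr Core Op)} {c : Core}
      {i : Instr Core Op} {rest : List (Instr Core Op)} :
      (q, heads V, q', Act.right c) ∈ M.Δ → V c = i :: rest →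
      Step M ⟨U, q, V⟩ none
        ⟨Function.update U c (U c ++ [i]), q', Function.update V c rest⟩
  | stay {q q' : Q} {U V : Core → List (Instr Core Op)} :
      (q, heads V, q', Act.stay) ∈ M.Δ →
      Step M ⟨U, q, V⟩ none ⟨U, q', V⟩
  | sched {q q' : Q} {U V : Core → List (Instr Core Op)} {c : Core}
      {idx : ℕ} {st : Stage} (hidx : idx < (U c).length) :
      (q, heads V, q', Act.sched c idx st) ∈ M.Δ →
      Step M ⟨U, q, V⟩ (some ⟨(U c).get ⟨idx, hidx⟩, st⟩) ⟨U, q', V⟩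
  | drop {q q' : Q} {U V : Core → List (Instr Core Op)} {c : Core} {idx : ℕ} :
      idx < (U c).length →
      (q, heads V, q', Act.drop c idx) ∈ M.Δ →
      Step M ⟨U, q, V⟩ none ⟨Function.update U c ((U c).eraseIdx idx), q', V⟩

/-- Reachability through allowed configurations, accumulating the trace of
emitted events. -/
inductive Reach {Core Stage Op Q : Type} [DecidableEq Core]
    (M : OpModel Core Stage Op Q) :
    Config Core Op Q → List (Event Core Stage Op) → Config Core Op Q → Prop
  | refl (γ : Config Core Op Q) : Allowed M.hist γ → Reach M γ [] γ
  | step {γ0 : Config Core Op Q} {tr : List (Event Core Stage Op)}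
      {γ1 γ2 : Config Core Op Q} {ev : Option (Event Core Stage Op)} :
      Reach M γ0 tr γ1 → Step M γ1 ev γ2 → Allowed M.hist γ2 →
      Reach M γ0 (tr ++ ev.toList) γ2

/-- The instruction stream of core `c`, as a list of instructions. -/
def streamInstrs {Core Op : Type} (P : Program Core Op) (c : Core) :
    List (Instr Core Op) :=
  (P c).zipIdx.map fun jo => ⟨c, jo.2, jo.1⟩

/-- The initial configuration on program `P`: empty left tapes, control state
`q_init`, and each right tape holding the corresponding instruction stream. -/
def initConfig {Core Stage Op Q : Type} (M : OpModel Core Stage Op Q)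
    (P : Program Core Op) : Config Core Op Q :=
  ⟨fun _ => [], M.qinit, fun c => streamInstrs P c⟩

/-- `Traces(M, P)`: traces of accepting runs of `M` on `P`. -/
def Traces {Core Stage Op Q : Type} [DecidableEq Core]
    (M : OpModel Core Stage Op Q) (P : Program Core Op) :
    Set (List (Event Core Stage Op)) :=
  {tr | ∃ γ, Reach M (initConfig M P) tr γ ∧ γ.q = M.qfinal}

/-- Soundness on a fixed program: every accepted trace is a linearization of
some valid μhb graph. -/
def SoundOn {Core Stage Op Q PSym : Type} [DecidableEq Core] {ar : PSym → ℕ}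
    (interp : ∀ p : PSym, (Fin (ar p) → Op) → Prop)
    (M : OpModel Core Stage Op Q) (A : List (UAxiom Stage PSym ar))
    (P : Program Core Op) : Prop :=
  ∀ σ ∈ Traces M P, ∃ E, IsMuHb (events Stage P) E ∧ Models interp P E A ∧
    IsLinearization P E σ

/-- Soundness: soundness on every program. -/
def Sound {Core Stage Op Q PSym : Type} [DecidableEq Core] {ar : PSym → ℕ}
    (interp : ∀ p : PSym, (Fin (ar p) → Op) → Prop)
    (M : OpModel Core Stage Op Q) (A : List (UAxiom Stage PSym ar)) : Prop :=
  ∀ P : Program Core Op, SoundOn interp M A P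

/-- Completeness on a fixed program: every linearization of every valid μhb
graph is an accepted trace. -/
def CompleteOn {Core Stage Op Q PSym : Type} [DecidableEq Core] {ar : PSym → ℕ}
    (interp : ∀ p : PSym, (Fin (ar p) → Op) → Prop)
    (M : OpModel Core Stage Op Q) (A : List (UAxiom Stage PSym ar))
    (P : Program Core Op) : Prop :=
  ∀ E : Event Core Stage Op → Event Core Stage Op → Prop,
    IsMuHb (events Stage P) E → Models interp P E A →
    ∀ σ, IsLinearization P E σ → σ ∈ Traces M P

/-- Completeness: completeness on every program. -/
def Complete {Core Stage Op Q PSym : Type} [DecidableEq Core] {ar : PSym → ℕ}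
    (interp : ∀ p : PSym, (Fin (ar p) → Op) → Prop)
    (M : OpModel Core Stage Op Q) (A : List (UAxiom Stage PSym ar)) : Prop :=
  ∀ P : Program Core Op, CompleteOn interp M A P

/-- The stage set `{S, T}`. -/
inductive Stg : Type
  | S
  | T
  deriving DecidableEq

/-- Arity function for the empty family of predicate symbols. -/
def emptyAr : Empty → ℕ := fun p => p.elim

/-- The (vacuous) interpretation of the empty family of predicate symbols. -/
def noPreds {Op : Type} : ∀ p : Empty, (Fin (emptyAr p) → Op) → Prop :=
  fun p => p.elim

/-- `ax0 : ∀ i1. hb(i1.S, i1.T)`. -/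
def axZero : UAxiom Stg Empty emptyAr := ⟨1, .hb 0 .S 0 .T⟩

/-- `ax1 : ∀ i1 i2. hb(i1.S, i2.S) ⇒ hb(i1.T, i2.T)`. -/
def axOne : UAxiom Stg Empty emptyAr :=
  ⟨2, .disj (.neg (.hb 0 .S 1 .S)) (.hb 0 .T 1 .T)⟩

/-- The semantics `A#`. -/
def Ahash : List (UAxiom Stg Empty emptyAr) := [axZero, axOne]

/-- The single-core program with `m` (identical, trivial) instructions. -/
def singleCoreProg (m : ℕ) : Program Unit Unit := fun _ => List.replicate m ()

section LowerBound

/-- The instruction with label `j` of the single-core program. -/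
def ι (j : ℕ) : Instr Unit Unit := ⟨(), j, ()⟩

lemma ι_injective : Function.Injective ι := by
  intro a b h
  exact congrArg Instr.lbl h

/-- `S`-event and `T`-event of instruction `j`. -/
def aE (j : ℕ) : Event Unit Stg Unit := ⟨ι j, Stg.S⟩
def bE (j : ℕ) : Event Unit Stg Unit := ⟨ι j, Stg.T⟩

/-- The instruction stream of the single-core program, explicitly. -/
def str (m : ℕ) : List (Instr Unit Unit) := (List.range m).map ι

lemma str_length (m : ℕ) : (str m).length = m := by simp [str]

lemma str_eq (m : ℕ) : streamInstrs (singleCoreProg m) () = str m := by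
  apply List.ext_getElem
  · simp [streamInstrs, str, singleCoreProg]
  · intro i h1 h2
    simp [streamInstrs, str, singleCoreProg, ι]

lemma str_nodup (m : ℕ) : (str m).Nodup :=
  (List.nodup_range (n := m)).map ι_injective

lemma mem_instrs {m : ℕ} (i : Instr Unit Unit) :
    i ∈ instrs (singleCoreProg m) ↔ i.lbl < m := by
  simp only [instrs, singleCoreProg, Set.mem_setOf_eq, List.getElem?_replicate]
  split_ifs with h
  · simp [h]
  · simp [h]

lemma mem_events {m : ℕ} (e : Event Unit Stg Unit) :
    e ∈ events Stg (singleCoreProg m) ↔ e.instr.lbl < m := by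
  simp only [events, eventsOf, Set.mem_setOf_eq]
  exact mem_instrs e.instr

variable {Q : Type} {M : OpModel Unit Stg Unit Q}

/-- Concatenation of runs. -/
lemma reach_append {γ0 γ1 γ2 : Config Unit Unit Q}
    {s t : List (Event Unit Stg Unit)}
    (h1 : Reach M γ0 s γ1) (h2 : Reach M γ1 t γ2) :
    Reach M γ0 (s ++ t) γ2 := by
  induction h2 with
  | refl hA => simpa using h1
  | step hR hS hA ih =>
    rw [← List.append_assoc]
    exact Reach.step ih hS hA

/-- Splitting of runs at a trace decomposition point. -/
lemma reach_split {γ0 γ2 : Config Unit Unit Q} {tr : List (Event Unit Stg Unit)}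
    (h : Reach M γ0 tr γ2) :
    ∀ s t, tr = s ++ t → ∃ γ1, Reach M γ0 s γ1 ∧ Reach M γ1 t γ2 := by
  induction h with
  | refl hA =>
    intro s t ht
    obtain ⟨rfl, rfl⟩ := List.append_eq_nil_iff.mp ht.symm
    exact ⟨_, Reach.refl _ hA, Reach.refl _ hA⟩
  | step hR hS hA ih =>
    rename_i tr' γm γlast ev
    intro s t ht
    rcases eq_or_ne t [] with rfl | hne
    · rw [List.append_nil] at ht
      exact ⟨γlast, ht ▸ Reach.step hR hS hA, Reach.refl γlast hA⟩
    · cases ev with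
      | none =>
        simp only [Option.toList, List.append_nil] at ht
        obtain ⟨γ1, hm1, hm2⟩ := ih s t ht
        refine ⟨γ1, hm1, ?_⟩
        have := Reach.step hm2 hS hA
        simpa using this
      | some e =>
        obtain ⟨t₀, x, rfl⟩ := (List.eq_nil_or_concat t).resolve_left hne
        rw [List.concat_eq_append] at ht ⊢
        rw [← List.append_assoc] at ht
        obtain ⟨h1, h2⟩ := List.append_inj' ht (by simp)
        obtain rfl : e = x := by simpa using h2
        obtain ⟨γ1, hm1, hm2⟩ := ih s t₀ h1
        refine ⟨γ1, hm1, ?_⟩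
        have := Reach.step hm2 hS hA
        simpa using this

/-- The tape invariant: the left tape is a sublist of the consumed prefix
and the right tape is the remaining suffix of the stream. -/
def Inv (m : ℕ) (γ : Config Unit Unit Q) : Prop :=
  ∃ k, (γ.U ()).Sublist ((str m).take k) ∧ γ.V () = (str m).drop k

lemma step_inv {m : ℕ} {γ γ' : Config Unit Unit Q} {ev}
    (h : Step M γ ev γ') (hI : Inv m γ) : Inv m γ' := by
  obtain ⟨k, hU, hV⟩ := hI
  cases h with
  | right hΔ hcons =>
    rename_i q q' U V c i rest
    have hdk : (str m).drop k = i :: rest := by rw [← hV]; exact hcons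
    have hget : (str m)[k]? = some i := by
      have := congrArg List.head? hdk
      rwa [List.head?_drop] at this
    refine ⟨k + 1, ?_, ?_⟩
    · have hts : (str m).take (k + 1) = (str m).take k ++ [i] := by
        rw [List.take_succ, hget]; rfl
      show (Function.update U c (U c ++ [i]) ()).Sublist _
      rw [hts]
      have h2 : Function.update U c (U c ++ [i]) () = U () ++ [i] :=
        Function.update_self c (U c ++ [i]) U
      rw [h2]
      exact List.Sublist.append hU (List.Sublist.refl _)
    · show Function.update V c rest () = _
      have h1 : Function.update V c rest () = rest :=
        Function.update_self c rest V
      have h2 : (str m).drop (k + 1) = rest := by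
        have := congrArg List.tail hdk
        rw [List.tail_drop] at this
        simpa using this
      rw [h1, h2]
  | stay hΔ => exact ⟨k, hU, hV⟩
  | sched hidx hΔ => exact ⟨k, hU, hV⟩
  | drop hidx hΔ =>
    rename_i q q' U V c idx
    refine ⟨k, ?_, hV⟩
    show (Function.update U c ((U c).eraseIdx idx) ()).Sublist _
    have h2 : Function.update U c ((U c).eraseIdx idx) () = (U ()).eraseIdx idx :=
      Function.update_self c ((U c).eraseIdx idx) U
    rw [h2]
    exact (List.eraseIdx_sublist (U ()) idx).trans hU

lemma reach_inv {m : ℕ} {γ0 γ1 : Config Unit Unit Q} {tr}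
    (h : Reach M γ0 tr γ1) (h0 : Inv m γ0) : Inv m γ1 := by
  induction h with
  | refl hA => exact h0
  | step hR hS hA ih => exact step_inv hS ih

lemma step_V_suffix {γ γ' : Config Unit Unit Q} {ev}
    (h : Step M γ ev γ') : (γ'.V ()).IsSuffix (γ.V ()) := by
  cases h with
  | right hΔ hcons =>
    rename_i q q' U V c i rest
    show (Function.update V c rest ()).IsSuffix (V ())
    have h1 : Function.update V c rest () = rest :=
      Function.update_self c rest V
    have h0 : V () = i :: rest := hcons
    rw [h1, h0]
    exact ⟨[i], rfl⟩
  | stay hΔ => exact List.suffix_refl _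
  | sched hidx hΔ => exact List.suffix_refl _
  | drop hidx hΔ => exact List.suffix_refl _

/-- Every instruction one of whose events has been emitted is no longer on
the right tape. -/
lemma reach_not_mem_V {m : ℕ} {γ0 γ1 : Config Unit Unit Q} {tr}
    (h : Reach M γ0 tr γ1) (h0 : Inv m γ0) :
    ∀ e ∈ tr, e.instr ∉ γ1.V () := by
  induction h with
  | refl hA => simp
  | step hR hS hA ih =>
    intro e he
    rcases List.mem_append.mp he with he | he
    · exact fun hc => ih e he ((step_V_suffix hS).subset hc)
    · have hInv := reach_inv hR h0
      obtain ⟨k, hU, hV⟩ := hInv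
      cases hS with
      | right hΔ hcons => simp at he
      | stay hΔ => simp at he
      | drop hidx hΔ => simp at he
      | sched hidx hΔ =>
        rename_i U V c idx st he'
        simp only [Option.toList, List.mem_singleton] at he
        subst he
        intro hc
        have h1 : (U c).get ⟨idx, hidx⟩ ∈ (str m).take k :=
          hU.subset (List.get_mem _ _)
        have h2 : (U c).get ⟨idx, hidx⟩ ∈ (str m).drop k := by
          rw [← hV]; exact hc
        have hnd := str_nodup m
        rw [← List.take_append_drop k (str m), List.nodup_append'] at hnd
        exact hnd.2.2 h1 h2

/-- In a run starting with empty right tape: the right tape stays empty, the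
left tape only shrinks, and every emitted event's instruction was on the left
tape initially. -/
lemma reach_vnil {γ1 γ2 : Config Unit Unit Q} {tr}
    (h : Reach M γ1 tr γ2) (hV : γ1.V () = []) :
    γ2.V () = [] ∧ (γ2.U ()).Sublist (γ1.U ()) ∧
      ∀ e ∈ tr, e.instr ∈ γ1.U () := by
  induction h with
  | refl hA => exact ⟨hV, List.Sublist.refl _, by simp⟩
  | step hR hS hA ih =>
    obtain ⟨h1, h2, h3⟩ := ih
    cases hS with
    | right hΔ hcons =>
      exfalso
      rename_i q q' U V c i rest
      have hcc : V () = i :: rest := hcons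
      have hnil : V () = [] := h1
      rw [hnil] at hcc
      exact List.cons_ne_nil i rest hcc.symm
    | stay hΔ =>
      refine ⟨h1, h2, ?_⟩
      intro e he
      rcases List.mem_append.mp he with he | he
      · exact h3 e he
      · simp at he
    | sched hidx hΔ =>
      rename_i U V c idx st
      refine ⟨h1, h2, ?_⟩
      intro e he
      rcases List.mem_append.mp he with he | he
      · exact h3 e he
      · simp only [Option.toList, List.mem_singleton] at he
        subst he
        exact h2.subset (List.get_mem (U c) ⟨idx, hidx⟩)
    | drop hidx hΔ =>
      rename_i q q' U V c idx
      refine ⟨h1, ?_, ?_⟩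
      · show (Function.update U c ((U c).eraseIdx idx) ()).Sublist _
        have he : Function.update U c ((U c).eraseIdx idx) () = (U ()).eraseIdx idx :=
          Function.update_self c ((U c).eraseIdx idx) U
        rw [he]
        exact (List.eraseIdx_sublist (U ()) idx).trans h2
      · intro e he
        rcases List.mem_append.mp he with he | he
        · exact h3 e he
        · simp at he

end LowerBound
section GraphSide

/-- The minimal valid μhb graph: an edge from `i.S` to `i.T` for each
instruction. -/
def E0 (m : ℕ) : Event Unit Stg Unit → Event Unit Stg Unit → Prop :=
  fun e1 e2 => e1.instr = e2.instr ∧ e1.instr ∈ instrs (singleCoreProg m) ∧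
    e1.stage = Stg.S ∧ e2.stage = Stg.T

lemma E0_of_transGen {m : ℕ} {e1 e2 : Event Unit Stg Unit}
    (h : Relation.TransGen (E0 m) e1 e2) : E0 m e1 e2 := by
  induction h with
  | single h => exact h
  | tail h1 h2 ih =>
    exfalso
    have hb := h2.2.2.1
    rw [ih.2.2.2] at hb
    exact Stg.noConfusion hb

lemma E0_muhb (m : ℕ) : IsMuHb (events Stg (singleCoreProg m)) (E0 m) := by
  constructor
  · intro e1 e2 h
    constructor
    · exact (mem_events e1).mpr ((mem_instrs e1.instr).mp h.2.1)
    · refine (mem_events e2).mpr ?_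
      rw [← h.1]
      exact (mem_instrs e1.instr).mp h.2.1
  · intro x hx
    have h := E0_of_transGen hx
    have hb := h.2.2.1
    rw [h.2.2.2] at hb
    exact Stg.noConfusion hb

lemma E0_models (m : ℕ) : Models noPreds (singleCoreProg m) (E0 m) Ahash := by
  intro ax hax
  simp only [Ahash, List.mem_cons, List.not_mem_nil, or_false] at hax
  rcases hax with rfl | rfl
  · intro s hinj hmem
    exact Relation.TransGen.single ⟨rfl, hmem ⟨0, Nat.one_pos⟩, rfl, rfl⟩
  · intro s hinj hmem
    refine Or.inl ?_
    intro h
    have h' := E0_of_transGen h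
    exact Stg.noConfusion h'.2.2.2

end GraphSide

section Traces

/-- The label lists of the fooling prefix and suffix for a label set `f`. -/
def l1 (m : ℕ) (f : Finset ℕ) : List ℕ :=
  (List.range m).filter (fun j => j ∈ f ∨ j = m - 1)

def l2 (m : ℕ) (f : Finset ℕ) : List ℕ :=
  (List.range m).filter (fun j => ¬ (j ∈ f ∨ j = m - 1))

/-- The fooling prefix: `S`-events of `f ∪ {m-1}` in increasing label order. -/
def pX (m : ℕ) (f : Finset ℕ) : List (Event Unit Stg Unit) := (l1 m f).map aE

/-- The fooling suffix: the remaining `S`-events, then all `T`-events. -/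
def tX (m : ℕ) (f : Finset ℕ) : List (Event Unit Stg Unit) :=
  (l2 m f).map aE ++ (List.range m).map bE

def wX (m : ℕ) (f : Finset ℕ) : List (Event Unit Stg Unit) := pX m f ++ tX m f

lemma aE_injective : Function.Injective aE := by
  intro a b h
  exact ι_injective (congrArg Event.instr h)

lemma bE_injective : Function.Injective bE := by
  intro a b h
  exact ι_injective (congrArg Event.instr h)

lemma mem_map_aE {L : List ℕ} {e : Event Unit Stg Unit} :
    e ∈ L.map aE ↔ e.stage = Stg.S ∧ e.instr.lbl ∈ L := by
  constructor
  · intro h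
    obtain ⟨j, hj, rfl⟩ := List.mem_map.mp h
    exact ⟨rfl, hj⟩
  · rintro ⟨h1, h2⟩
    refine List.mem_map.mpr ⟨e.instr.lbl, h2, ?_⟩
    obtain ⟨⟨⟨⟩, j, ⟨⟩⟩, st⟩ := e
    cases h1
    rfl

lemma mem_map_bE {L : List ℕ} {e : Event Unit Stg Unit} :
    e ∈ L.map bE ↔ e.stage = Stg.T ∧ e.instr.lbl ∈ L := by
  constructor
  · intro h
    obtain ⟨j, hj, rfl⟩ := List.mem_map.mp h
    exact ⟨rfl, hj⟩
  · rintro ⟨h1, h2⟩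
    refine List.mem_map.mpr ⟨e.instr.lbl, h2, ?_⟩
    obtain ⟨⟨⟨⟩, j, ⟨⟩⟩, st⟩ := e
    cases h1
    rfl

lemma mem_l1 {m : ℕ} {f : Finset ℕ} {j : ℕ} :
    j ∈ l1 m f ↔ j < m ∧ (j ∈ f ∨ j = m - 1) := by
  simp [l1]

lemma mem_l2 {m : ℕ} {f : Finset ℕ} {j : ℕ} :
    j ∈ l2 m f ↔ j < m ∧ ¬ (j ∈ f ∨ j = m - 1) := by
  simp [l2]

lemma aE_mem_pX {m : ℕ} {f : Finset ℕ} {j : ℕ} :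
    aE j ∈ pX m f ↔ j < m ∧ (j ∈ f ∨ j = m - 1) := by
  rw [pX, mem_map_aE]
  simp [aE, ι, mem_l1]

lemma aE_mem_tX {m : ℕ} {f : Finset ℕ} {j : ℕ} :
    aE j ∈ tX m f ↔ j < m ∧ ¬ (j ∈ f ∨ j = m - 1) := by
  rw [tX, List.mem_append, mem_map_aE, mem_map_bE]
  simp [aE, ι, mem_l2]

lemma nodup_concat_wpart {m : ℕ} (f g : Finset ℕ)
    (h : (pX m g ++ tX m f).Nodup) : (pX m g).Disjoint (tX m f) :=
  (List.nodup_append'.mp h).2.2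

/-- The fooling word is a permutation of the events of the program. -/
lemma perm_wX (m : ℕ) (f : Finset ℕ) :
    ∀ e, e ∈ wX m f ↔ e ∈ events Stg (singleCoreProg m) := by
  intro e
  rw [mem_events, wX, List.mem_append, tX, List.mem_append, pX,
    mem_map_aE, mem_map_aE, mem_map_bE]
  constructor
  · rintro (⟨_, h⟩ | ⟨_, h⟩ | ⟨_, h⟩)
    · exact (mem_l1.mp h).1
    · exact (mem_l2.mp h).1
    · exact List.mem_range.mp h
  · intro h
    rcases hst : e.stage
    · by_cases hp : e.instr.lbl ∈ f ∨ e.instr.lbl = m - 1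
      · exact Or.inl ⟨rfl, mem_l1.mpr ⟨h, hp⟩⟩
      · exact Or.inr (Or.inl ⟨rfl, mem_l2.mpr ⟨h, hp⟩⟩)
    · exact Or.inr (Or.inr ⟨rfl, List.mem_range.mpr h⟩)

lemma nodup_wX (m : ℕ) (f : Finset ℕ) : (pX m f ++ tX m f).Nodup := by
  rw [List.nodup_append', tX, List.nodup_append']
  refine ⟨?_, ⟨?_, ?_, ?_⟩, ?_⟩
  · exact (((List.nodup_range (n := m)).filter _).map aE_injective)
  · exact (((List.nodup_range (n := m)).filter _).map aE_injective)
  · exact ((List.nodup_range (n := m)).map bE_injective)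
  · intro e he1 he2
    have h1 := mem_map_aE.mp he1
    have h2 := mem_map_bE.mp he2
    rw [h1.1] at h2
    exact Stg.noConfusion h2.1
  · intro e he1 he2
    have h1 := mem_map_aE.mp he1
    rcases List.mem_append.mp he2 with he2 | he2
    · have h2 := mem_map_aE.mp he2
      have hg := mem_l1.mp h1.2
      have hf := mem_l2.mp h2.2
      exact hf.2 hg.2
    · have h2 := mem_map_bE.mp he2
      rw [h1.1] at h2
      exact Stg.noConfusion h2.1

lemma listEdge_append {α : Type} {s t : List α} {x y : α}
    (hx : x ∈ s) (hy : y ∈ t) : listEdge (s ++ t) x y := by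
  obtain ⟨n, hn, rfl⟩ := List.mem_iff_getElem.mp hx
  obtain ⟨k, hk, rfl⟩ := List.mem_iff_getElem.mp hy
  refine ⟨n, s.length + k, by omega, ?_, ?_⟩
  · rw [List.getElem?_append_left hn]
    exact List.getElem?_eq_getElem hn
  · rw [List.getElem?_append_right (by omega)]
    simp only [Nat.add_sub_cancel_left]
    exact List.getElem?_eq_getElem hk

lemma lin_wX (m : ℕ) (f : Finset ℕ) :
    IsLinearization (singleCoreProg m) (E0 m) (wX m f) := by
  refine ⟨⟨nodup_wX m f, perm_wX m f⟩, ?_⟩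
  intro e1 e2 h
  have h0 := E0_of_transGen h
  have hl : e1.instr.lbl < m := (mem_instrs _).mp h0.2.1
  have hgrp : wX m f = ((l1 m f).map aE ++ (l2 m f).map aE) ++
      (List.range m).map bE := by
    simp [wX, pX, tX]
  rw [hgrp]
  apply listEdge_append
  · rw [List.mem_append, mem_map_aE, mem_map_aE]
    by_cases hp : e1.instr.lbl ∈ f ∨ e1.instr.lbl = m - 1
    · exact Or.inl ⟨h0.2.2.1, mem_l1.mpr ⟨hl, hp⟩⟩
    · exact Or.inr ⟨h0.2.2.1, mem_l2.mpr ⟨hl, hp⟩⟩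
  · rw [mem_map_bE]
    refine ⟨h0.2.2.2, List.mem_range.mpr ?_⟩
    rw [← h0.1]
    exact hl

end Traces
section Main

/-- At the cut point after the fooling prefix, the tape configuration is
forced: the left tape is the full stream and the right tape is empty. -/
lemma cut_shape {m : ℕ} (hm : 1 ≤ m) {Q : Type} {M : OpModel Unit Stg Unit Q}
    {f : Finset ℕ} {γc γf : Config Unit Unit Q}
    (h1 : Reach M (initConfig M (singleCoreProg m)) (pX m f) γc)
    (h2 : Reach M γc (tX m f) γf) :
    γc.U = (fun _ => str m) ∧ γc.V = (fun _ => ([] : List (Instr Unit Unit))) := by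
  have hInv0 : Inv m (initConfig M (singleCoreProg m)) :=
    ⟨0, by simp [initConfig], by simp [initConfig, str_eq]⟩
  obtain ⟨k, hU, hV⟩ := reach_inv h1 hInv0
  have hmem : aE (m - 1) ∈ pX m f := aE_mem_pX.mpr ⟨by omega, Or.inr rfl⟩
  have hnot := reach_not_mem_V h1 hInv0 _ hmem
  have hk : m ≤ k := by
    by_contra hk
    push_neg at hk
    apply hnot
    rw [hV]
    have hlt : m - 1 - k < (List.drop k (str m)).length := by
      rw [List.length_drop, str_length]
      omega
    have he : (List.drop k (str m))[m - 1 - k]'hlt = ι (m - 1) := by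
      rw [List.getElem_drop]
      have hkk : k + (m - 1 - k) = m - 1 := by omega
      simp only [str, List.getElem_map, hkk]
      congr 1
      exact List.getElem_range _
    show (aE (m - 1)).instr ∈ _
    have : (aE (m - 1)).instr = ι (m - 1) := rfl
    rw [this, ← he]
    exact List.getElem_mem hlt
  have hVnil : γc.V () = [] := by
    rw [hV]
    exact List.drop_eq_nil_of_le (by rw [str_length]; omega)
  have hUsub : (γc.U ()).Sublist (str m) := hU.trans (List.take_sublist _ _)
  obtain ⟨-, -, hmem2⟩ := reach_vnil h2 hVnil
  have hsup : str m ⊆ γc.U () := by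
    intro x hx
    simp only [str, List.mem_map, List.mem_range] at hx
    obtain ⟨j, hj, rfl⟩ := hx
    have hb : bE j ∈ tX m f := by
      rw [tX, List.mem_append]
      exact Or.inr (List.mem_map.mpr ⟨j, List.mem_range.mpr hj, rfl⟩)
    exact hmem2 _ hb
  have hlen : (str m).length ≤ (γc.U ()).length :=
    (List.subperm_of_subset (str_nodup m) hsup).length_le
  have hUeq : γc.U () = str m := hUsub.eq_of_length (le_antisymm hUsub.length_le hlen)
  exact ⟨funext fun u => hUeq, funext fun u => hVnil⟩

/-- The combinatorial core: a sound and complete model has at least `2^(m-1)`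
control states. -/
lemma key_card {m : ℕ} (hm : 1 ≤ m) {Q : Type} [Fintype Q]
    (M : OpModel Unit Stg Unit Q)
    (hs : SoundOn noPreds M Ahash (singleCoreProg m))
    (hc : CompleteOn noPreds M Ahash (singleCoreProg m)) :
    2 ^ (m - 1) ≤ Fintype.card Q := by
  classical
  have hw : ∀ f : Finset ℕ, wX m f ∈ Traces M (singleCoreProg m) := fun f =>
    hc (E0 m) (E0_muhb m) (E0_models m) _ (lin_wX m f)
  have hcut : ∀ f : Finset ℕ, ∃ q : Q,
      Reach M (initConfig M (singleCoreProg m)) (pX m f)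
        ⟨fun _ => str m, q, fun _ => []⟩ ∧
      ∃ γf, Reach M ⟨fun _ => str m, q, fun _ => []⟩ (tX m f) γf ∧
        γf.q = M.qfinal := by
    intro f
    obtain ⟨γf, hreach, hq⟩ := hw f
    obtain ⟨γc, h1, h2⟩ := reach_split hreach (pX m f) (tX m f) rfl
    obtain ⟨hcU, hcV⟩ := cut_shape hm h1 h2
    have hγ : γc = ⟨fun _ => str m, γc.q, fun _ => []⟩ := by
      cases γc
      simp only [Config.mk.injEq]
      exact ⟨hcU, trivial, hcV⟩
    exact ⟨γc.q, hγ ▸ h1, γf, hγ ▸ h2, hq⟩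
  choose F hF1 hF2 using hcut
  have hinj : Set.InjOn F ((Finset.range (m - 1)).powerset : Finset (Finset ℕ)) := by
    intro f hf g hg heq
    by_contra hne
    have hfs : f ⊆ Finset.range (m - 1) := Finset.mem_powerset.mp hf
    have hgs : g ⊆ Finset.range (m - 1) := Finset.mem_powerset.mp hg
    -- splice: prefix of g, suffix of f
    obtain ⟨γf, h2f, hqf⟩ := hF2 f
    have h2f' : Reach M ⟨fun _ => str m, F g, fun _ => []⟩ (tX m f) γf :=
      heq ▸ h2f
    have hspl : Reach M (initConfig M (singleCoreProg m))
        (pX m g ++ tX m f) γf := reach_append (hF1 g) h2f'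
    have htr : pX m g ++ tX m f ∈ Traces M (singleCoreProg m) := ⟨γf, hspl, hqf⟩
    obtain ⟨E, _, _, hlin⟩ := hs _ htr
    have hpt := hlin.1
    -- derive contradiction
    have hcases : (∃ j, j ∈ f ∧ j ∉ g) ∨ (∃ j, j ∈ g ∧ j ∉ f) := by
      by_contra hno
      push_neg at hno
      apply hne
      exact Finset.Subset.antisymm (fun j hj => hno.1 j hj) (fun j hj => hno.2 j hj)
    rcases hcases with ⟨j, hjf, hjg⟩ | ⟨j, hjg, hjf⟩
    · have hjm : j < m - 1 := Finset.mem_range.mp (hfs hjf)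
      have hin : aE j ∈ pX m g ++ tX m f :=
        (hpt.2 (aE j)).mpr ((mem_events _).mpr (show (aE j).instr.lbl < m by
          show j < m; omega))
      rcases List.mem_append.mp hin with h | h
      · have hh := aE_mem_pX.mp h
        rcases hh.2 with h' | h'
        · exact hjg h'
        · omega
      · exact (aE_mem_tX.mp h).2 (Or.inl hjf)
    · have hjm : j < m - 1 := Finset.mem_range.mp (hgs hjg)
      have h1 : aE j ∈ pX m g := aE_mem_pX.mpr ⟨by omega, Or.inl hjg⟩
      have h2 : aE j ∈ tX m f := aE_mem_tX.mpr ⟨by omega, ?_⟩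
      · exact (List.nodup_append'.mp hpt.1).2.2 h1 h2
      · rintro (h | h)
        · exact hjf h
        · omega
  have hcard := Finset.card_le_card_of_injOn F
    (fun x _ => Finset.mem_univ (F x)) hinj
  rw [Finset.card_powerset, Finset.card_range, Finset.card_univ] at hcard
  exact hcard

end Main
/-- **Impossibility of small sound and complete models for `A#`** (Thm. 1).
There is a constant `c > 0` such that for every `m ≥ 1`, every operational
model `M` with a finite state set `Q` that is sound and complete with respect
to `A#` on the single-core program with `m` instructions — even with unbounded
history `h = ∞` — satisfies `|Q| ≥ c * 2^m / m`. -/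
theorem no_small_sound_complete_model :
    ∃ c : ℝ, 0 < c ∧ ∀ m : ℕ, 1 ≤ m →
      ∀ (Q : Type) [Fintype Q], ∀ M : OpModel Unit Stg Unit Q,
        M.hist = ⊤ →
        SoundOn noPreds M Ahash (singleCoreProg m) →
        CompleteOn noPreds M Ahash (singleCoreProg m) →
        c * 2 ^ m / m ≤ (Fintype.card Q : ℝ) := by
  refine ⟨1 / 2, by norm_num, ?_⟩
  intro m hm Q _ M _ hsound hcomplete
  have hkey := key_card hm M hsound hcomplete
  obtain ⟨n, rfl⟩ : ∃ n, m = n + 1 := ⟨m - 1, by omega⟩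
  have h1 : (2 : ℝ) ^ n ≤ (Fintype.card Q : ℝ) := by
    have h2 : (2 : ℕ) ^ n ≤ Fintype.card Q := by simpa using hkey
    exact_mod_cast h2
  have hn : (0 : ℝ) < (n : ℝ) + 1 := by positivity
  push_cast
  rw [div_le_iff₀ hn]
  have e : (1 / 2 : ℝ) * 2 ^ (n + 1) = 2 ^ n := by ring
  rw [e]
  calc (2 : ℝ) ^ n ≤ (Fintype.card Q : ℝ) := h1
    _ ≤ (Fintype.card Q : ℝ) * ((n : ℝ) + 1) := by
        refine le_mul_of_one_le_right (Nat.cast_nonneg _) ?_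
        have := Nat.cast_nonneg (α := ℝ) n
        linarith

end USpec
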